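/- Five pairwise disjoint lines in a 3-plane H ⊂ P^4, three of which (say l_1, l_2, l_3) span H and lie in one ruling R_1 of a smooth quadric surface Q ⊂ H, are in special position with respect to 2-planes of P^4 only if either all five lines belong to the ruling R_1, or l_4 and l_5 are not contained in Q and the five lines possess exactly one or exactly two common secant lines. -/

import Mathlib

open Module
open Submodule

/-- Special position of lines (2-dimensional subspaces of `ℂ⁵`) with respect to 2-planes
(3-dimensional subspaces). -/
def SpecialPosition {n : ℕ} (l : Fin n → Submodule ℂ (Fin 5 → ℂ)) : Prop :=
  ∀ i : Fin n, ∀ Λ : Submodule ℂ (Fin 5 → ℂ), finrank ℂ Λ = 3 →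
    (∀ j : Fin n, j ≠ i → Λ ⊓ l j ≠ ⊥) → Λ ⊓ l i ≠ ⊥

lemma aux_pol (B : (Fin 5 → ℂ) →ₗ[ℂ] (Fin 5 → ℂ) →ₗ[ℂ] ℂ) (hsymm : ∀ x y, B x y = B y x)
    (W : Submodule ℂ (Fin 5 → ℂ)) (h : ∀ x ∈ W, B x x = 0) :
    ∀ x ∈ W, ∀ y ∈ W, B x y = 0 := by
  intro x hx y hy
  have h2 := h (x + y) (W.add_mem hx hy)
  simp only [map_add, LinearMap.add_apply] at h2
  rw [h x hx, h y hy, hsymm y x] at h2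
  linear_combination h2 / 2

lemma aux_surj (W : Submodule ℂ (Fin 5 → ℂ)) (hW : finrank ℂ W = 2)
    (f g : (Fin 5 → ℂ) →ₗ[ℂ] ℂ) (hinj : ∀ w ∈ W, f w = 0 → g w = 0 → w = 0) (u v : ℂ) :
    ∃ z ∈ W, f z = u ∧ g z = v := by
  set φ : W →ₗ[ℂ] ℂ × ℂ := LinearMap.prod (f.comp W.subtype) (g.comp W.subtype) with hφ
  have hinj' : Function.Injective φ := by
    rw [← LinearMap.ker_eq_bot, eq_bot_iff]
    rintro ⟨w, hw⟩ hker
    simp only [LinearMap.mem_ker, hφ, LinearMap.prod_apply, Function.prod, Prod.mk_eq_zero,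
      LinearMap.comp_apply, Submodule.coe_subtype] at hker
    simpa using hinj w hw hker.1 hker.2
  have hsurj : Function.Surjective φ := by
    rw [← LinearMap.injective_iff_surjective_of_finrank_eq_finrank (by simp [hW])]
    exact hinj'
  obtain ⟨⟨z, hz⟩, hz2⟩ := hsurj (u, v)
  exact ⟨z, hz, by simpa [hφ, Prod.ext_iff] using hz2⟩

lemma aux_factor (α β γ : ℂ) (hne : ¬(α = 0 ∧ β = 0 ∧ γ = 0)) :
    ∃ c1 c2 c3 c4 : ℂ, (∀ x y : ℂ, α*x^2 + β*(x*y) + γ*y^2 = (c1*x + c2*y)*(c3*x + c4*y)) ∧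
      ¬(c1 = 0 ∧ c2 = 0) ∧ ¬(c3 = 0 ∧ c4 = 0) := by
  by_cases hα : α = 0
  · refine ⟨0, 1, β, γ, fun x y => by rw [hα]; ring, by simp, ?_⟩
    rintro ⟨h1, h2⟩; exact hne ⟨hα, h1, h2⟩
  · obtain ⟨s, hs⟩ := IsAlgClosed.exists_pow_nat_eq (β^2 - 4*α*γ) zero_lt_two
    refine ⟨α, -((-β+s)/(2*α)) * α, 1, -((-β-s)/(2*α)), fun x y => ?_, ?_, ?_⟩
    · field_simp
      ring_nf
      linear_combination y^2 * hs
    · simp [hα]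
    · simp

lemma aux_span_pair (x y : Fin 5 → ℂ) (h : ∀ s t : ℂ, s•x + t•y = 0 → s = 0 ∧ t = 0) :
    finrank ℂ (span ℂ ({x, y} : Set (Fin 5 → ℂ))) = 2 := by
  have hli : LinearIndependent ℂ ![x, y] := LinearIndependent.pair_iff.2 h
  have h2 := finrank_span_eq_card hli
  rw [show Set.range ![x,y] = {x,y} by
    simp [Matrix.range_cons, Matrix.range_empty]; exact Set.pair_comm y x] at h2
  simpa using h2

lemma aux_basis (W : Submodule ℂ (Fin 5 → ℂ)) (hW : finrank ℂ W = 2) :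
    ∃ e f : Fin 5 → ℂ, e ∈ W ∧ f ∈ W ∧ (∀ w ∈ W, ∃ x y : ℂ, w = x•e + y•f) ∧
      (∀ x y : ℂ, x•e + y•f = 0 → x = 0 ∧ y = 0) := by
  let b := Module.finBasisOfFinrankEq ℂ W hW
  refine ⟨b 0, b 1, (b 0).2, (b 1).2, ?_, ?_⟩
  · intro w hw
    have h := b.sum_repr ⟨w, hw⟩
    refine ⟨b.repr ⟨w,hw⟩ 0, b.repr ⟨w,hw⟩ 1, ?_⟩
    have h2 := congrArg (Subtype.val) h
    rw [Fin.sum_univ_two] at h2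
    push_cast at h2
    exact h2.symm
  · intro x y hxy
    have h : (x • (b 0) + y • (b 1) : W) = 0 := by
      apply Subtype.ext
      push_cast
      exact hxy
    have hli := Fintype.linearIndependent_iff.1 b.linearIndependent ![x, y]
      (by rwa [Fin.sum_univ_two, Matrix.cons_val_zero, Matrix.cons_val_one, Matrix.cons_val_zero])
    exact ⟨hli 0, hli 1⟩

set_option maxHeartbeats 1600000 in
/-- Five pairwise disjoint lines in a 3-plane `H ⊆ ℙ⁴`, the first three of which span `H`
and lie in one ruling of the smooth quadric surface `Q ⊆ H` (cut out by a symmetric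
bilinear form `B` nondegenerate on `H`, the secant variety of the first three lines), are
in special position only if either all five lines lie on `Q` (hence, being pairwise skew,
in the ruling `R₁`), or `l₄, l₅` are not contained in `Q` and the five lines possess
exactly one or exactly two common secant lines. -/
theorem five_skew_lines_with_three_on_quadric
    (l : Fin 5 → Submodule ℂ (Fin 5 → ℂ))
    (H : Submodule ℂ (Fin 5 → ℂ)) (hH : finrank ℂ H = 4)
    (hl : ∀ i, finrank ℂ (l i) = 2)
    (hlH : ∀ i, l i ≤ H)
    (hskew : ∀ i j, i ≠ j → l i ⊓ l j = ⊥)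
    (hspan : l 0 ⊔ l 1 ⊔ l 2 = H)
    (B : (Fin 5 → ℂ) →ₗ[ℂ] (Fin 5 → ℂ) →ₗ[ℂ] ℂ)
    (hsymm : ∀ x y, B x y = B y x)
    (hnd : ∀ x ∈ H, (∀ y ∈ H, B x y = 0) → x = 0)
    (hruling : ∀ i : Fin 5, i.val < 3 → ∀ x ∈ l i, ∀ y ∈ l i, B x y = 0)
    (hsp : SpecialPosition l) :
    (∀ i : Fin 5, ∀ x ∈ l i, ∀ y ∈ l i, B x y = 0) ∨
    ((∀ i : Fin 5, 3 ≤ i.val → ∃ x ∈ l i, B x x ≠ 0) ∧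
      ∃ L₁ L₂ : Submodule ℂ (Fin 5 → ℂ),
        {L : Submodule ℂ (Fin 5 → ℂ) | finrank ℂ L = 2 ∧ ∀ i, L ⊓ l i ≠ ⊥} = {L₁, L₂}) := by
  classical
  have hskew' : ∀ i j, i ≠ j → ∀ x, x ∈ l i → x ∈ l j → x = 0 := by
    intro i j hij x hxi hxj
    have h : x ∈ l i ⊓ l j := ⟨hxi, hxj⟩
    rw [hskew i j hij] at h
    simpa using h
  have h0 := hruling 0 (by norm_num)
  have h1 := hruling 1 (by norm_num)
  have h2 := hruling 2 (by norm_num)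
  obtain ⟨a, b, ha, hb, hspan0, hind0⟩ := aux_basis (l 0) (hl 0)
  have hsup : l 0 ⊔ l 1 = H := by
    have hle : l 0 ⊔ l 1 ≤ H := sup_le (hlH 0) (hlH 1)
    have hrk : finrank ℂ ↥(l 0 ⊔ l 1) = 4 := by
      have := Submodule.finrank_sup_add_finrank_inf_eq (l 0) (l 1)
      rw [hskew 0 1 (by norm_num), hl 0, hl 1] at this
      simpa using this
    exact Submodule.eq_of_le_of_finrank_le hle (by rw [hrk, hH])
  -- construct dual basis c, d of l 1
  obtain ⟨c, hc, hac, hbc⟩ := aux_surj (l 1) (hl 1) (B a) (B b) (by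
    intro w hw hfw hgw
    apply hnd w (hlH 1 hw)
    intro y hy
    rw [← hsup] at hy
    obtain ⟨y0, hy0, y1, hy1, rfl⟩ := Submodule.mem_sup.1 hy
    obtain ⟨s, t, rfl⟩ := hspan0 y0 hy0
    have e1 : B w a = 0 := by rw [hsymm]; exact hfw
    have e2 : B w b = 0 := by rw [hsymm]; exact hgw
    have e3 : B w y1 = 0 := h1 w hw y1 hy1
    simp [map_add, map_smul, e1, e2, e3]) 1 0
  obtain ⟨d, hd, had, hbd⟩ := aux_surj (l 1) (hl 1) (B a) (B b) (by
    intro w hw hfw hgw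
    apply hnd w (hlH 1 hw)
    intro y hy
    rw [← hsup] at hy
    obtain ⟨y0, hy0, y1, hy1, rfl⟩ := Submodule.mem_sup.1 hy
    obtain ⟨s, t, rfl⟩ := hspan0 y0 hy0
    have e1 : B w a = 0 := by rw [hsymm]; exact hfw
    have e2 : B w b = 0 := by rw [hsymm]; exact hgw
    have e3 : B w y1 = 0 := h1 w hw y1 hy1
    simp [map_add, map_smul, e1, e2, e3]) 0 1
  have haa : B a a = 0 := h0 a ha a ha
  have hab : B a b = 0 := h0 a ha b hb
  have hbb : B b b = 0 := h0 b hb b hb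
  have hcc : B c c = 0 := h1 c hc c hc
  have hcd : B c d = 0 := h1 c hc d hd
  have hdd : B d d = 0 := h1 d hd d hd
  have hba : B b a = 0 := by rw [hsymm]; exact hab
  have hdc : B d c = 0 := by rw [hsymm]; exact hcd
  have hca : B c a = 1 := by rw [hsymm]; exact hac
  have hcb : B c b = 0 := by rw [hsymm]; exact hbc
  have hda : B d a = 0 := by rw [hsymm]; exact had
  have hdb : B d b = 1 := by rw [hsymm]; exact hbd
  -- independence of a, b, c, d
  have hindep : ∀ s t p q : ℂ, s•a + t•b + p•c + q•d = 0 → s = 0 ∧ t = 0 ∧ p = 0 ∧ q = 0 := by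
    intro s t p q hz
    have e1 := congrArg (fun x => B x c) hz
    have e2 := congrArg (fun x => B x d) hz
    have e3 := congrArg (fun x => B x a) hz
    have e4 := congrArg (fun x => B x b) hz
    simp only [map_add, map_smul, LinearMap.add_apply, LinearMap.smul_apply, smul_eq_mul,
      haa, hab, hba, hbb, hcc, hcd, hdc, hdd, hac, hca, hbc, hcb, had, hda, hbd, hdb,
      LinearMap.zero_apply, map_zero, mul_one, mul_zero, one_mul, add_zero, zero_add] at e1 e2 e3 e4
    exact ⟨e1, e2, e3, e4⟩
  have hane : a ≠ 0 := fun h => by simp [h] at hac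
  have hl1span : ∀ y ∈ l 1, ∃ p q : ℂ, y = p•c + q•d := by
    have hsp2 : span ℂ ({c, d} : Set (Fin 5 → ℂ)) = l 1 := by
      have hle : span ℂ ({c, d} : Set (Fin 5 → ℂ)) ≤ l 1 := by
        rw [span_le]
        rintro x (rfl | rfl) <;> assumption
      refine Submodule.eq_of_le_of_finrank_le hle ?_
      rw [hl 1, aux_span_pair c d ?_]
      intro s t h
      have := hindep 0 0 s t (by simpa using h)
      exact ⟨this.2.2.1, this.2.2.2⟩
    intro y hy
    rw [← hsp2] at hy
    obtain ⟨p, q, hpq⟩ := Submodule.mem_span_pair.1 hy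
    exact ⟨p, q, hpq.symm⟩
  have hrep : ∀ z ∈ H, z = B z c • a + B z d • b + B z a • c + B z b • d := by
    intro z hz
    rw [← hsup] at hz
    obtain ⟨y0, hy0, y1, hy1, rfl⟩ := Submodule.mem_sup.1 hz
    obtain ⟨s, t, rfl⟩ := hspan0 y0 hy0
    obtain ⟨p, q, rfl⟩ := hl1span y1 hy1
    have e1 : B (s•a + t•b + (p•c + q•d)) c = s := by
      simp only [map_add, map_smul, LinearMap.add_apply, LinearMap.smul_apply, smul_eq_mul,
        haa, hab, hba, hbb, hcc, hcd, hdc, hdd, hac, hca, hbc, hcb, had, hda, hbd, hdb,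
        mul_one, mul_zero, one_mul, add_zero, zero_add]
    have e2 : B (s•a + t•b + (p•c + q•d)) d = t := by
      simp only [map_add, map_smul, LinearMap.add_apply, LinearMap.smul_apply, smul_eq_mul,
        haa, hab, hba, hbb, hcc, hcd, hdc, hdd, hac, hca, hbc, hcb, had, hda, hbd, hdb,
        mul_one, mul_zero, one_mul, add_zero, zero_add]
    have e3 : B (s•a + t•b + (p•c + q•d)) a = p := by
      simp only [map_add, map_smul, LinearMap.add_apply, LinearMap.smul_apply, smul_eq_mul,
        haa, hab, hba, hbb, hcc, hcd, hdc, hdd, hac, hca, hbc, hcb, had, hda, hbd, hdb,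
        mul_one, mul_zero, one_mul, add_zero, zero_add]
    have e4 : B (s•a + t•b + (p•c + q•d)) b = q := by
      simp only [map_add, map_smul, LinearMap.add_apply, LinearMap.smul_apply, smul_eq_mul,
        haa, hab, hba, hbb, hcc, hcd, hdc, hdd, hac, hca, hbc, hcb, had, hda, hbd, hdb,
        mul_one, mul_zero, one_mul, add_zero, zero_add]
    rw [e1, e2, e3, e4]
    module
  have hgraph : ∀ k : Fin 5, k ≠ 0 → k ≠ 1 → (∀ x ∈ l k, ∀ y ∈ l k, B x y = 0) →
      ∃ r : ℂ, r ≠ 0 ∧ a + r•d ∈ l k ∧ b - r•c ∈ l k := by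
    intro k hk0 hk1 hti
    have hinjk : ∀ w ∈ l k, B c w = 0 → B d w = 0 → w = 0 := by
      intro w hw hcw hdw
      have hwc : B w c = 0 := by rw [hsymm]; exact hcw
      have hwd : B w d = 0 := by rw [hsymm]; exact hdw
      have hrw := hrep w (hlH k hw)
      rw [hwc, hwd, zero_smul, zero_smul, zero_add, zero_add] at hrw
      have hw1 : w ∈ l 1 := by
        rw [hrw]
        exact add_mem (smul_mem _ _ hc) (smul_mem _ _ hd)
      exact hskew' k 1 hk1 w hw hw1
    obtain ⟨z, hzk, hzc, hzd⟩ := aux_surj (l k) (hl k) (B c) (B d) hinjk 1 0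
    obtain ⟨z', hzk', hzc', hzd'⟩ := aux_surj (l k) (hl k) (B c) (B d) hinjk 0 1
    have hzc2 : B z c = 1 := by rw [hsymm]; exact hzc
    have hzd2 : B z d = 0 := by rw [hsymm]; exact hzd
    have hzc2' : B z' c = 0 := by rw [hsymm]; exact hzc'
    have hzd2' : B z' d = 1 := by rw [hsymm]; exact hzd'
    have hrz := hrep z (hlH k hzk)
    have hrz' := hrep z' (hlH k hzk')
    rw [hzc2, hzd2, zero_smul, one_smul, add_zero] at hrz
    rw [hzc2', hzd2', zero_smul, one_smul, zero_add] at hrz'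
    set p := B z a with hp
    set q := B z b with hq
    set p' := B z' a with hp'
    set q' := B z' b with hq'
    -- B z z = 0 gives p = 0
    have hzz := hti z hzk z hzk
    rw [hrz] at hzz
    simp only [map_add, map_smul, LinearMap.add_apply, LinearMap.smul_apply, smul_eq_mul,
      haa, hab, hba, hbb, hcc, hcd, hdc, hdd, hac, hca, hbc, hcb, had, hda, hbd, hdb,
      mul_one, mul_zero, one_mul, add_zero, zero_add] at hzz
    have hp0 : p = 0 := by linear_combination hzz / 2
    have hzz' := hti z' hzk' z' hzk'
    rw [hrz'] at hzz'
    simp only [map_add, map_smul, LinearMap.add_apply, LinearMap.smul_apply, smul_eq_mul,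
      haa, hab, hba, hbb, hcc, hcd, hdc, hdd, hac, hca, hbc, hcb, had, hda, hbd, hdb,
      mul_one, mul_zero, one_mul, add_zero, zero_add] at hzz'
    have hq0' : q' = 0 := by linear_combination hzz' / 2
    have hcross := hti z hzk z' hzk'
    rw [hrz, hrz', hp0, hq0', zero_smul, zero_smul, add_zero, add_zero] at hcross
    simp only [map_add, map_smul, LinearMap.add_apply, LinearMap.smul_apply, smul_eq_mul,
      haa, hab, hba, hbb, hcc, hcd, hdc, hdd, hac, hca, hbc, hcb, had, hda, hbd, hdb,
      mul_one, mul_zero, one_mul, add_zero, zero_add] at hcross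
    -- hcross : p' + q = 0
    have hqne : q ≠ 0 := by
      intro hq0
      have hza : z = a := by rw [hrz, hp0, hq0, zero_smul, zero_smul, add_zero, add_zero]
      exact hane (hskew' k 0 hk0 a (hza ▸ hzk) ha)
    refine ⟨q, hqne, ?_, ?_⟩
    · have : a + q•d ∈ l k := by rw [hp0, zero_smul, add_zero] at hrz; rw [← hrz]; exact hzk
      exact this
    · have hpq : p' = -q := by linear_combination hcross
      have : b - q•c ∈ l k := by
        rw [hq0', zero_smul, add_zero, hpq] at hrz'
        have : b + (-q)•c = b - q•c := by module
        rw [this] at hrz'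
        rw [← hrz']
        exact hzk'
      exact this
  -- ruling lines
  have hMrank : ∀ s t : ℂ, ¬(s = 0 ∧ t = 0) →
      finrank ℂ (span ℂ ({s•a + t•b, s•d - t•c} : Set (Fin 5 → ℂ))) = 2 := by
    intro s t hst
    apply aux_span_pair
    intro α β h
    have h4 := hindep (α*s) (α*t) (-(β*t)) (β*s) (by rw [← h]; module)
    constructor
    · rcases mul_eq_zero.1 h4.1 with h'|h'
      · exact h'
      rcases mul_eq_zero.1 h4.2.1 with h''|h''
      · exact h''
      exact absurd ⟨h', h''⟩ hst
    · rcases mul_eq_zero.1 h4.2.2.2 with h'|h'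
      · exact h'
      rcases mul_eq_zero.1 (neg_eq_zero.1 h4.2.2.1) with h''|h''
      · exact h''
      exact absurd ⟨h', h''⟩ hst
  have hMB : ∀ (s t s' t' α β α' β' : ℂ),
      B (α•(s•a+t•b) + β•(s•d - t•c)) (α'•(s'•a+t'•b) + β'•(s'•d - t'•c)) =
        (α*β' - β*α')*(t*s' - s*t') := by
    intro s t s' t' α β α' β'
    simp only [map_add, map_sub, map_smul, LinearMap.add_apply, LinearMap.sub_apply,
      LinearMap.smul_apply, smul_eq_mul,
      haa, hab, hba, hbb, hcc, hcd, hdc, hdd, hac, hca, hbc, hcb, had, hda, hbd, hdb]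
    ring
  have hMiso : ∀ s t : ℂ, ∀ x ∈ span ℂ ({s•a + t•b, s•d - t•c} : Set (Fin 5 → ℂ)), B x x = 0 := by
    intro s t x hx
    obtain ⟨α, β, rfl⟩ := Submodule.mem_span_pair.1 hx
    rw [hMB]
    ring
  have hMdisj : ∀ s t s' t' : ℂ, s*t' - t*s' ≠ 0 → ∀ x,
      x ∈ span ℂ ({s•a + t•b, s•d - t•c} : Set (Fin 5 → ℂ)) →
      x ∈ span ℂ ({s'•a + t'•b, s'•d - t'•c} : Set (Fin 5 → ℂ)) → x = 0 := by
    intro s t s' t' hdet x hx hx'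
    obtain ⟨α, β, hαβ⟩ := Submodule.mem_span_pair.1 hx
    obtain ⟨α', β', hαβ'⟩ := Submodule.mem_span_pair.1 hx'
    have heq : (α*s - α'*s')•a + (α*t - α'*t')•b + (-(β*t) + β'*t')•c + (β*s - β'*s')•d = 0 := by
      have : (α*s - α'*s')•a + (α*t - α'*t')•b + (-(β*t) + β'*t')•c + (β*s - β'*s')•d =
          (α•(s•a+t•b) + β•(s•d - t•c)) - (α'•(s'•a+t'•b) + β'•(s'•d - t'•c)) := by module
      rw [this, hαβ, hαβ']
      simp
    have h4 := hindep _ _ _ _ heq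
    have hα : α = 0 := by
      have : α * (s*t' - t*s') = 0 := by linear_combination t'*h4.1 - s'*h4.2.1
      exact (mul_eq_zero.1 this).resolve_right hdet
    have hβ : β = 0 := by
      have : β * (s*t' - t*s') = 0 := by linear_combination t'*h4.2.2.2 + s'*h4.2.2.1
      exact (mul_eq_zero.1 this).resolve_right hdet
    rw [← hαβ, hα, hβ, zero_smul, zero_smul, add_zero]
  -- a vector outside H
  have hHtop : ∃ v : Fin 5 → ℂ, v ∉ H := by
    have hne : H ≠ ⊤ := by
      intro h
      rw [h, finrank_top] at hH
      simp [Module.finrank_pi] at hH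
    have hlt : H < ⊤ := lt_top_iff_ne_top.2 hne
    obtain ⟨v, -, hv⟩ := SetLike.exists_of_lt hlt
    exact ⟨v, hv⟩
  obtain ⟨v, hv⟩ := hHtop
  have hvne : v ≠ 0 := fun h => hv (h ▸ H.zero_mem)
  -- descent of special position to 2-planes inside H
  have hdesc : ∀ x₁ x₂ : Fin 5 → ℂ, x₁ ∈ H → x₂ ∈ H →
      finrank ℂ (span ℂ ({x₁, x₂} : Set (Fin 5 → ℂ))) = 2 → ∀ i : Fin 5,
      (∀ j : Fin 5, j ≠ i → (span ℂ ({x₁, x₂} : Set (Fin 5 → ℂ))) ⊓ l j ≠ ⊥) →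
      (span ℂ ({x₁, x₂} : Set (Fin 5 → ℂ))) ⊓ l i ≠ ⊥ := by
    intro x₁ x₂ hx₁ hx₂ hrk i hmeets
    set M := span ℂ ({x₁, x₂} : Set (Fin 5 → ℂ)) with hM
    have hMH : M ≤ H := by
      rw [hM, span_le]
      rintro x (rfl | rfl) <;> assumption
    have hinf : M ⊓ (ℂ ∙ v) = ⊥ := by
      rw [eq_bot_iff]
      rintro x ⟨hxM, hxv⟩
      obtain ⟨e, rfl⟩ := Submodule.mem_span_singleton.1 hxv
      rcases eq_or_ne e 0 with rfl | he
      · simp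
      · exact absurd (by simpa [he] using H.smul_mem e⁻¹ (hMH hxM)) hv
    have hrkΛ : finrank ℂ ↥(M ⊔ (ℂ ∙ v)) = 3 := by
      have h5 := Submodule.finrank_sup_add_finrank_inf_eq M (ℂ ∙ v)
      rw [hinf, hrk, finrank_span_singleton hvne, finrank_bot] at h5
      omega
    have hΛ := hsp i (M ⊔ (ℂ ∙ v)) hrkΛ (by
      intro j hj
      have := hmeets j hj
      rw [Submodule.ne_bot_iff] at this ⊢
      obtain ⟨x, ⟨hxM, hxl⟩, hxne⟩ := this
      exact ⟨x, ⟨le_sup_left (α := Submodule ℂ (Fin 5 → ℂ)) hxM, hxl⟩, hxne⟩)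
    rw [Submodule.ne_bot_iff] at hΛ ⊢
    obtain ⟨x, ⟨hxΛ, hxl⟩, hxne⟩ := hΛ
    obtain ⟨m, hm, w, hw, rfl⟩ := Submodule.mem_sup.1 hxΛ
    obtain ⟨e, rfl⟩ := Submodule.mem_span_singleton.1 hw
    have he : e = 0 := by
      by_contra he
      have : e • v ∈ H := by
        have h6 : e • v = (m + e • v) - m := by abel
        rw [h6]
        exact H.sub_mem (hlH i hxl) (hMH hm)
      exact hv (by simpa [he] using H.smul_mem e⁻¹ this)
    subst he
    rw [zero_smul, add_zero] at hxl hxne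
    exact ⟨m, ⟨hm, hxl⟩, hxne⟩
  -- membership helpers for ruling lines
  have hgen1H : ∀ s t : ℂ, s•a + t•b ∈ H := fun s t =>
    H.add_mem (H.smul_mem _ (hlH 0 ha)) (H.smul_mem _ (hlH 0 hb))
  have hgen2H : ∀ s t : ℂ, s•d - t•c ∈ H := fun s t =>
    H.sub_mem (H.smul_mem _ (hlH 1 hd)) (H.smul_mem _ (hlH 1 hc))
  have hmem1 : ∀ s t : ℂ, s•a + t•b ∈ span ℂ ({s•a + t•b, s•d - t•c} : Set (Fin 5 → ℂ)) :=
    fun s t => subset_span (by simp)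
  have hmem2 : ∀ s t : ℂ, s•d - t•c ∈ span ℂ ({s•a + t•b, s•d - t•c} : Set (Fin 5 → ℂ)) :=
    fun s t => subset_span (by simp)
  have hnz1 : ∀ s t : ℂ, ¬(s = 0 ∧ t = 0) → s•a + t•b ≠ 0 := by
    intro s t hst h
    have := hindep s t 0 0 (by rw [← h]; module)
    exact hst ⟨this.1, this.2.1⟩
  have hnz2 : ∀ s t : ℂ, ¬(s = 0 ∧ t = 0) → s•d - t•c ≠ 0 := by
    intro s t hst h
    have := hindep 0 0 (-t) s (by rw [← h]; module)
    exact hst ⟨this.2.2.2, neg_eq_zero.1 this.2.2.1⟩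
  have hnz3 : ∀ s t r : ℂ, ¬(s = 0 ∧ t = 0) → (s•a + t•b) + r•(s•d - t•c) ≠ 0 := by
    intro s t r hst h
    have := hindep s t (-(r*t)) (r*s) (by rw [← h]; module)
    exact hst ⟨this.1, this.2.1⟩
  have hgraphmem : ∀ (k : Fin 5) (r : ℂ), a + r•d ∈ l k → b - r•c ∈ l k →
      ∀ s t : ℂ, (s•a + t•b) + r•(s•d - t•c) ∈ l k := by
    intro k r hk1 hk2 s t
    have h7 : (s•a + t•b) + r•(s•d - t•c) = s•(a + r•d) + t•(b - r•c) := by module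
    rw [h7]
    exact add_mem (smul_mem _ _ hk1) (smul_mem _ _ hk2)
  have hmem3 : ∀ s t r : ℂ, (s•a + t•b) + r•(s•d - t•c) ∈
      span ℂ ({s•a + t•b, s•d - t•c} : Set (Fin 5 → ℂ)) :=
    fun s t r => add_mem (hmem1 s t) (smul_mem _ _ (hmem2 s t))
  have hnebot : ∀ (N P : Submodule ℂ (Fin 5 → ℂ)) (x : Fin 5 → ℂ),
      x ∈ N → x ∈ P → x ≠ 0 → N ⊓ P ≠ ⊥ :=
    fun N P x hN hP hne => Submodule.ne_bot_iff _ |>.2 ⟨x, ⟨hN, hP⟩, hne⟩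
  -- solving for the l1-component
  have hsolve : ∀ s t p q : ℂ, ¬(s = 0 ∧ t = 0) → s*p + t*q = 0 →
      ∃ ρ : ℂ, p = -(ρ*t) ∧ q = ρ*s := by
    intro s t p q hst h
    by_cases hs : s = 0
    · have ht : t ≠ 0 := fun h' => hst ⟨hs, h'⟩
      have hq : q = 0 := by
        rw [hs, zero_mul, zero_add] at h
        exact (mul_eq_zero.1 h).resolve_left ht
      refine ⟨-p/t, by field_simp, by rw [hs, mul_zero, hq]⟩
    · refine ⟨q/s, ?_, by field_simp⟩
      field_simp
      linear_combination h
  -- isotropic directions on a non-isotropic line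
  have hisodir : ∀ k : Fin 5, (∃ x ∈ l k, B x x ≠ 0) → ∃ w₁ w₂ : Fin 5 → ℂ,
      w₁ ∈ l k ∧ w₂ ∈ l k ∧ w₁ ≠ 0 ∧ w₂ ≠ 0 ∧ B w₁ w₁ = 0 ∧ B w₂ w₂ = 0 ∧
      (∀ w ∈ l k, B w w = 0 → (∃ μ : ℂ, w = μ•w₁) ∨ (∃ μ : ℂ, w = μ•w₂)) := by
    rintro k ⟨x0, hx0, hx0ne⟩
    obtain ⟨e, f, he, hf, hspanε, hindε⟩ := aux_basis (l k) (hl k)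
    set α := B e e with hα
    set β := B e f + B f e with hβ
    set γ := B f f with hγ
    have hqval : ∀ x y : ℂ, B (x•e + y•f) (x•e + y•f) = α*x^2 + β*(x*y) + γ*y^2 := by
      intro x y
      simp only [map_add, map_smul, LinearMap.add_apply, LinearMap.smul_apply, smul_eq_mul,
        hα, hβ, hγ]
      ring
    have hne0 : ¬(α = 0 ∧ β = 0 ∧ γ = 0) := by
      rintro ⟨h1', h2', h3'⟩
      obtain ⟨x, y, rfl⟩ := hspanε x0 hx0
      apply hx0ne
      rw [hqval, h1', h2', h3']
      ring
    obtain ⟨c1, c2, c3, c4, hfact, hc12, hc34⟩ := aux_factor α β γ hne0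
    have hsolve2 : ∀ (c1' c2' x y : ℂ), ¬(c1' = 0 ∧ c2' = 0) → c1'*x + c2'*y = 0 →
        ∃ μ : ℂ, x•e + y•f = μ•(c2'•e - c1'•f) := by
      intro c1' c2' x y h12 hxy
      by_cases hc1 : c1' = 0
      · have hc2 : c2' ≠ 0 := fun h' => h12 ⟨hc1, h'⟩
        have hy : y = 0 := by
          rw [hc1, zero_mul, zero_add] at hxy
          exact (mul_eq_zero.1 hxy).resolve_left hc2
        refine ⟨x/c2', ?_⟩
        rw [hy, hc1]
        match_scalars <;> field_simp <;> ring
      · refine ⟨-y/c1', ?_⟩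
        match_scalars
        · field_simp
          linear_combination hxy
        · field_simp
    refine ⟨c2•e - c1•f, c4•e - c3•f,
      sub_mem (smul_mem _ _ he) (smul_mem _ _ hf),
      sub_mem (smul_mem _ _ he) (smul_mem _ _ hf), ?_, ?_, ?_, ?_, ?_⟩
    · intro h
      have := hindε c2 (-c1) (by rw [← h]; module)
      exact hc12 ⟨neg_eq_zero.1 this.2, this.1⟩
    · intro h
      have := hindε c4 (-c3) (by rw [← h]; module)
      exact hc34 ⟨neg_eq_zero.1 this.2, this.1⟩
    · have h15 : c2•e - c1•f = c2•e + (-c1)•f := by module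
      rw [h15, hqval, hfact]
      ring
    · have h15 : c4•e - c3•f = c4•e + (-c3)•f := by module
      rw [h15, hqval, hfact]
      ring
    · intro w hw hww
      obtain ⟨x, y, rfl⟩ := hspanε w hw
      rw [hqval, hfact] at hww
      rcases mul_eq_zero.1 hww with h' | h'
      · exact Or.inl (hsolve2 c1 c2 x y hc12 h')
      · exact Or.inr (hsolve2 c3 c4 x y hc34 h')
  -- the contradiction case: one of l3, l4 on the quadric, the other not
  have hcontra : ∀ m n : Fin 5, m ≠ 0 → m ≠ 1 →
      (∀ j : Fin 5, j = 0 ∨ j = 1 ∨ j = 2 ∨ j = m ∨ j = n) →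
      (∀ x ∈ l m, B x x = 0) → (∃ x ∈ l n, B x x ≠ 0) → False := by
    intro m n hm0 hm1 hcov hm hn
    obtain ⟨r2, hr20, h2a, h2b⟩ := hgraph 2 (by decide) (by decide) h2
    obtain ⟨rm, hrm0, hma, hmb⟩ := hgraph m hm0 hm1 (aux_pol B hsymm (l m) hm)
    have key : ∀ s t : ℂ, ¬(s = 0 ∧ t = 0) → ∃ w, w ≠ 0 ∧ w ∈ l n ∧
        w ∈ span ℂ ({s•a + t•b, s•d - t•c} : Set (Fin 5 → ℂ)) := by
      intro s t hst
      have hmeet := hdesc (s•a+t•b) (s•d-t•c) (hgen1H s t) (hgen2H s t) (hMrank s t hst) n (by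
        intro j hj
        rcases hcov j with rfl | rfl | rfl | rfl | rfl
        · exact hnebot _ _ _ (hmem1 s t) (add_mem (smul_mem _ _ ha) (smul_mem _ _ hb))
            (hnz1 s t hst)
        · exact hnebot _ _ _ (hmem2 s t) (sub_mem (smul_mem _ _ hd) (smul_mem _ _ hc))
            (hnz2 s t hst)
        · exact hnebot _ _ _ (hmem3 s t r2) (hgraphmem 2 r2 h2a h2b s t) (hnz3 s t r2 hst)
        · exact hnebot _ _ _ (hmem3 s t rm) (hgraphmem j rm hma hmb s t) (hnz3 s t rm hst)
        · exact absurd rfl hj)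
      rw [Submodule.ne_bot_iff] at hmeet
      obtain ⟨w, ⟨hwM, hwn⟩, hwne⟩ := hmeet
      exact ⟨w, hwne, hwn, hwM⟩
    obtain ⟨w₁, w₂, hw₁k, hw₂k, hw₁ne, hw₂ne, hw₁iso, hw₂iso, hclass⟩ := hisodir n hn
    obtain ⟨u1, hu1ne, hu1n, hu1M⟩ := key 1 0 (by norm_num)
    obtain ⟨u2, hu2ne, hu2n, hu2M⟩ := key 0 1 (by norm_num)
    obtain ⟨u3, hu3ne, hu3n, hu3M⟩ := key 1 1 (by norm_num)
    have hpair : ∀ (s t s' t' : ℂ), s*t' - t*s' ≠ 0 → ∀ (u u' w : Fin 5 → ℂ) (μ μ' : ℂ),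
        u ≠ 0 → u' ≠ 0 → u ∈ span ℂ ({s•a+t•b, s•d-t•c} : Set (Fin 5 → ℂ)) →
        u' ∈ span ℂ ({s'•a+t'•b, s'•d-t'•c} : Set (Fin 5 → ℂ)) →
        u = μ•w → u' = μ'•w → False := by
      intro s t s' t' hdet u u' w μ μ' hu hu' huM hu'M hμ hμ'
      have hμne : μ ≠ 0 := by rintro rfl; rw [zero_smul] at hμ; exact hu hμ
      have h8 : u' = (μ'/μ)•u := by
        rw [hμ, hμ', smul_smul]
        congr 1
        field_simp
      have h9 : u' ∈ span ℂ ({s•a+t•b, s•d-t•c} : Set (Fin 5 → ℂ)) := by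
        rw [h8]; exact smul_mem _ _ huM
      exact hu' (hMdisj s t s' t' hdet u' h9 hu'M)
    have hc1 := hclass u1 hu1n (hMiso 1 0 u1 hu1M)
    have hc2 := hclass u2 hu2n (hMiso 0 1 u2 hu2M)
    have hc3 := hclass u3 hu3n (hMiso 1 1 u3 hu3M)
    rcases hc1 with ⟨μ1, hμ1⟩ | ⟨μ1, hμ1⟩ <;> rcases hc2 with ⟨μ2, hμ2⟩ | ⟨μ2, hμ2⟩ <;>
        rcases hc3 with ⟨μ3, hμ3⟩ | ⟨μ3, hμ3⟩ <;>
      first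
        | exact hpair 1 0 0 1 (by norm_num) u1 u2 _ μ1 μ2 hu1ne hu2ne hu1M hu2M hμ1 hμ2
        | exact hpair 1 0 1 1 (by norm_num) u1 u3 _ μ1 μ3 hu1ne hu3ne hu1M hu3M hμ1 hμ3
        | exact hpair 0 1 1 1 (by norm_num) u2 u3 _ μ2 μ3 hu2ne hu3ne hu2M hu3M hμ2 hμ3
  -- helper for comparing ruling lines
  have hMsame : ∀ s t s' t' α : ℂ, α ≠ 0 → s' = α*s → t' = α*t →
      span ℂ ({s'•a + t'•b, s'•d - t'•c} : Set (Fin 5 → ℂ)) =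
      span ℂ ({s•a + t•b, s•d - t•c} : Set (Fin 5 → ℂ)) := by
    intro s t s' t' α hα hs' ht'
    apply le_antisymm <;> rw [span_le] <;> rintro x (rfl | rfl)
    · exact Submodule.mem_span_pair.2 ⟨α, 0, by rw [hs', ht']; module⟩
    · exact Submodule.mem_span_pair.2 ⟨0, α, by rw [hs', ht']; module⟩
    · exact Submodule.mem_span_pair.2 ⟨α⁻¹, 0, by
        rw [hs', ht']; match_scalars <;> (field_simp; try ring)⟩
    · exact Submodule.mem_span_pair.2 ⟨0, α⁻¹, by
        rw [hs', ht']; match_scalars <;> (field_simp; try ring)⟩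
  -- decomposition of an isotropic vector of a line skew to l0 and l1
  have hkey : ∀ w, w ∈ l 3 → w ≠ 0 → B w w = 0 → ∃ s t ρ : ℂ, ¬(s = 0 ∧ t = 0) ∧
      w = (s•a + t•b) + ρ•(s•d - t•c) := by
    intro w hw hwne hww
    have hwH := hlH 3 hw
    have hrw := hrep w hwH
    set s := B w c with hsdef
    set t := B w d with htdef
    set p := B w a with hpdef
    set q := B w b with hqdef
    have hst : ¬(s = 0 ∧ t = 0) := by
      rintro ⟨hs, ht⟩
      rw [hs, ht, zero_smul, zero_smul, zero_add, zero_add] at hrw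
      have hw1 : w ∈ l 1 := by
        rw [hrw]; exact add_mem (smul_mem _ _ hc) (smul_mem _ _ hd)
      exact hwne (hskew' 3 1 (by decide) w hw hw1)
    have hexp : s*p + t*q = 0 := by
      have h10 : B (s•a + t•b + p•c + q•d) (s•a + t•b + p•c + q•d) = 0 := by
        rw [← hrw]; exact hww
      simp only [map_add, map_smul, LinearMap.add_apply, LinearMap.smul_apply, smul_eq_mul,
        haa, hab, hba, hbb, hcc, hcd, hdc, hdd, hac, hca, hbc, hcb, had, hda, hbd, hdb,
        mul_one, mul_zero, one_mul, add_zero, zero_add] at h10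
      linear_combination h10 / 2
    obtain ⟨ρ, hρp, hρq⟩ := hsolve s t p q hst hexp
    refine ⟨s, t, ρ, hst, ?_⟩
    rw [hrw, hρp, hρq]
    module
  -- case analysis
  by_cases h3 : ∀ x ∈ l 3, B x x = 0
  · by_cases h4 : ∀ x ∈ l 4, B x x = 0
    · left
      intro i
      fin_cases i
      · exact hruling 0 (by norm_num)
      · exact hruling 1 (by norm_num)
      · exact hruling 2 (by norm_num)
      · exact aux_pol B hsymm (l 3) h3
      · exact aux_pol B hsymm (l 4) h4
    · push_neg at h4
      exact absurd (hcontra 3 4 (by decide) (by decide) (by decide) h3 h4) (not_false)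
  · push_neg at h3
    by_cases h4 : ∀ x ∈ l 4, B x x = 0
    · exact absurd (hcontra 4 3 (by decide) (by decide) (by decide) h4 h3) (not_false)
    · push_neg at h4
      right
      constructor
      · intro i hi
        have h9 : (i : ℕ) = 3 ∨ (i : ℕ) = 4 := by omega
        rcases h9 with h9 | h9
        · rwa [show i = 3 from Fin.ext h9]
        · rwa [show i = 4 from Fin.ext h9]
      obtain ⟨w₁, w₂, hw₁3, hw₂3, hw₁ne, hw₂ne, hw₁iso, hw₂iso, hclass⟩ := hisodir 3 h3
      obtain ⟨r2, hr20, h2a, h2b⟩ := hgraph 2 (by decide) (by decide) h2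
      obtain ⟨s₁, t₁, ρ₁, hst₁, hw₁eq⟩ := hkey w₁ hw₁3 hw₁ne hw₁iso
      obtain ⟨s₂, t₂, ρ₂, hst₂, hw₂eq⟩ := hkey w₂ hw₂3 hw₂ne hw₂iso
      -- membership of ruling lines through isotropic points of l3 in the secant set
      have hSmem : ∀ (s t ρ : ℂ) (w : Fin 5 → ℂ), ¬(s = 0 ∧ t = 0) → w ∈ l 3 → w ≠ 0 →
          w = (s•a + t•b) + ρ•(s•d - t•c) →
          finrank ℂ (span ℂ ({s•a+t•b, s•d-t•c} : Set (Fin 5 → ℂ))) = 2 ∧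
          ∀ i, (span ℂ ({s•a+t•b, s•d-t•c} : Set (Fin 5 → ℂ))) ⊓ l i ≠ ⊥ := by
        intro s t ρ w hst hw3 hwne hweq
        refine ⟨hMrank s t hst, ?_⟩
        have hwM : w ∈ span ℂ ({s•a+t•b, s•d-t•c} : Set (Fin 5 → ℂ)) := by
          rw [hweq]
          exact add_mem (hmem1 s t) (smul_mem _ _ (hmem2 s t))
        have hmeet0 : (span ℂ ({s•a+t•b, s•d-t•c} : Set (Fin 5 → ℂ))) ⊓ l 0 ≠ ⊥ :=
          hnebot _ _ _ (hmem1 s t) (add_mem (smul_mem _ _ ha) (smul_mem _ _ hb)) (hnz1 s t hst)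
        have hmeet1 : (span ℂ ({s•a+t•b, s•d-t•c} : Set (Fin 5 → ℂ))) ⊓ l 1 ≠ ⊥ :=
          hnebot _ _ _ (hmem2 s t) (sub_mem (smul_mem _ _ hd) (smul_mem _ _ hc)) (hnz2 s t hst)
        have hmeet2 : (span ℂ ({s•a+t•b, s•d-t•c} : Set (Fin 5 → ℂ))) ⊓ l 2 ≠ ⊥ :=
          hnebot _ _ _ (hmem3 s t r2) (hgraphmem 2 r2 h2a h2b s t) (hnz3 s t r2 hst)
        have hmeet3 : (span ℂ ({s•a+t•b, s•d-t•c} : Set (Fin 5 → ℂ))) ⊓ l 3 ≠ ⊥ :=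
          hnebot _ _ _ hwM hw3 hwne
        have hmeet4 := hdesc _ _ (hgen1H s t) (hgen2H s t) (hMrank s t hst) 4 (by
          intro j hj
          fin_cases j
          · exact hmeet0
          · exact hmeet1
          · exact hmeet2
          · exact hmeet3
          · exact absurd rfl hj)
        intro i
        fin_cases i
        · exact hmeet0
        · exact hmeet1
        · exact hmeet2
        · exact hmeet3
        · exact hmeet4
      refine ⟨span ℂ ({s₁•a + t₁•b, s₁•d - t₁•c} : Set (Fin 5 → ℂ)),
        span ℂ ({s₂•a + t₂•b, s₂•d - t₂•c} : Set (Fin 5 → ℂ)), ?_⟩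
      ext L
      simp only [Set.mem_setOf_eq, Set.mem_insert_iff, Set.mem_singleton_iff]
      constructor
      · rintro ⟨hL2, hLall⟩
        obtain ⟨u, ⟨huL, hu0⟩, hune⟩ := (Submodule.ne_bot_iff _).1 (hLall 0)
        obtain ⟨v', ⟨hvL, hv1⟩, hvne⟩ := (Submodule.ne_bot_iff _).1 (hLall 1)
        obtain ⟨z, ⟨hzL, hz2⟩, hzne⟩ := (Submodule.ne_bot_iff _).1 (hLall 2)
        obtain ⟨w, ⟨hwL, hw3⟩, hwne⟩ := (Submodule.ne_bot_iff _).1 (hLall 3)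
        obtain ⟨s, t, hueq⟩ := hspan0 u hu0
        obtain ⟨p, q, hveq⟩ := hl1span v' hv1
        have hst : ¬(s = 0 ∧ t = 0) := by
          rintro ⟨rfl, rfl⟩
          rw [zero_smul, zero_smul, zero_add] at hueq
          exact hune hueq
        have hpq : ¬(p = 0 ∧ q = 0) := by
          rintro ⟨rfl, rfl⟩
          rw [zero_smul, zero_smul, zero_add] at hveq
          exact hvne hveq
        have hLuv : span ℂ ({u, v'} : Set (Fin 5 → ℂ)) = L := by
          apply Submodule.eq_of_le_of_finrank_le
          · rw [span_le]
            rintro x (rfl | rfl)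
            exacts [huL, hvL]
          · rw [hL2, aux_span_pair u v' (by
              intro γ δ hγδ
              have h16 := hindep (γ*s) (γ*t) (δ*p) (δ*q) (by
                rw [show (γ*s)•a + (γ*t)•b + (δ*p)•c + (δ*q)•d = γ•(s•a + t•b) + δ•(p•c + q•d)
                  from by module, ← hueq, ← hveq, hγδ])
              constructor
              · rcases mul_eq_zero.1 h16.1 with h' | h'
                · exact h'
                rcases mul_eq_zero.1 h16.2.1 with h'' | h''
                · exact h''
                exact absurd ⟨h', h''⟩ hst
              · rcases mul_eq_zero.1 h16.2.2.1 with h' | h'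
                · exact h'
                rcases mul_eq_zero.1 h16.2.2.2 with h'' | h''
                · exact h''
                exact absurd ⟨h', h''⟩ hpq)]
        have hzuv : z ∈ span ℂ ({u, v'} : Set (Fin 5 → ℂ)) := by rw [hLuv]; exact hzL
        obtain ⟨x, y, hz⟩ := Submodule.mem_span_pair.1 hzuv
        have hxne : x ≠ 0 := by
          rintro rfl
          rw [zero_smul, zero_add] at hz
          have hz1 : z ∈ l 1 := by rw [← hz]; exact smul_mem _ _ hv1
          exact hzne (hskew' 2 1 (by decide) z hz2 hz1)
        have hyne : y ≠ 0 := by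
          rintro rfl
          rw [zero_smul, add_zero] at hz
          have hz0 : z ∈ l 0 := by rw [← hz]; exact smul_mem _ _ hu0
          exact hzne (hskew' 2 0 (by decide) z hz2 hz0)
        have hBuv : B u v' = 0 := by
          have h12 : B (x•u + y•v') (x•u + y•v') = 0 := by rw [hz]; exact h2 z hz2 z hz2
          simp only [map_add, map_smul, LinearMap.add_apply, LinearMap.smul_apply, smul_eq_mul,
            h0 u hu0 u hu0, h1 v' hv1 v' hv1, hsymm v' u, mul_zero, add_zero, zero_add] at h12
          have h13 : (2*x*y) * B u v' = 0 := by linear_combination h12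
          rcases mul_eq_zero.1 h13 with h' | h'
          · exact absurd h' (by simp [hxne, hyne])
          · exact h'
        have hexp : s*p + t*q = 0 := by
          have h17 : B (s•a + t•b) (p•c + q•d) = 0 := by rw [← hueq, ← hveq]; exact hBuv
          simp only [map_add, map_smul, LinearMap.add_apply, LinearMap.smul_apply, smul_eq_mul,
            haa, hab, hba, hbb, hcc, hcd, hdc, hdd, hac, hca, hbc, hcb, had, hda, hbd, hdb,
            mul_one, mul_zero, one_mul, add_zero, zero_add] at h17
          linear_combination h17
        obtain ⟨ρ, hρp, hρq⟩ := hsolve s t p q hst hexp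
        have hρne : ρ ≠ 0 := by
          rintro rfl
          exact hpq ⟨by rw [hρp]; ring, by rw [hρq]; ring⟩
        have hveq2 : v' = ρ•(s•d - t•c) := by
          rw [hveq, hρp, hρq]
          module
        have hLM : L = span ℂ ({s•a + t•b, s•d - t•c} : Set (Fin 5 → ℂ)) := by
          rw [← hLuv]
          apply le_antisymm
          · rw [span_le]
            rintro x' (rfl | rfl)
            · rw [hueq]; exact hmem1 s t
            · rw [hveq2]; exact smul_mem _ _ (hmem2 s t)
          · rw [span_le]
            rintro x' (rfl | rfl)
            · exact Submodule.mem_span_pair.2 ⟨1, 0, by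
                rw [hueq]; module⟩
            · exact Submodule.mem_span_pair.2 ⟨0, ρ⁻¹, by
                rw [hveq2, smul_smul, inv_mul_cancel₀ hρne, one_smul, zero_smul, zero_add]⟩
        have hwiso : B w w = 0 := hMiso s t w (by rw [← hLM]; exact hwL)
        have hfinal : ∀ (w' : Fin 5 → ℂ) (s' t' ρ' : ℂ), ¬(s' = 0 ∧ t' = 0) →
            w' = (s'•a + t'•b) + ρ'•(s'•d - t'•c) → w' ≠ 0 → (∃ μ : ℂ, w = μ•w') →
            L = span ℂ ({s'•a + t'•b, s'•d - t'•c} : Set (Fin 5 → ℂ)) := by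
          intro w' s' t' ρ' hst' hw'eq hw'ne ⟨μ, hμ⟩
          have hμne : μ ≠ 0 := by
            rintro rfl
            rw [zero_smul] at hμ
            exact hwne hμ
          have hw'L : w' ∈ span ℂ ({s•a + t•b, s•d - t•c} : Set (Fin 5 → ℂ)) := by
            have h18 : w' = μ⁻¹•w := by rw [hμ, smul_smul, inv_mul_cancel₀ hμne, one_smul]
            rw [h18]
            exact smul_mem _ _ (by rw [← hLM]; exact hwL)
          obtain ⟨x', y', hw''⟩ := Submodule.mem_span_pair.1 hw'L
          have h14 := hindep (x'*s - s') (x'*t - t') (-(y'*t) + ρ'*t') (y'*s - ρ'*s') (by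
            rw [show (x'*s - s')•a + (x'*t - t')•b + (-(y'*t) + ρ'*t')•c + (y'*s - ρ'*s')•d =
              (x'•(s•a + t•b) + y'•(s•d - t•c)) - ((s'•a + t'•b) + ρ'•(s'•d - t'•c))
              from by module, hw'', ← hw'eq, sub_self])
          have hs' : s' = x'*s := by linear_combination -h14.1
          have ht' : t' = x'*t := by linear_combination -h14.2.1
          have hx'ne : x' ≠ 0 := by
            rintro rfl
            rw [zero_mul] at hs' ht'
            exact hst' ⟨hs', ht'⟩
          exact hLM.trans (hMsame s t s' t' x' hx'ne hs' ht').symm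
        rcases hclass w hw3 hwiso with hcl | hcl
        · exact Or.inl (hfinal w₁ s₁ t₁ ρ₁ hst₁ hw₁eq hw₁ne hcl)
        · exact Or.inr (hfinal w₂ s₂ t₂ ρ₂ hst₂ hw₂eq hw₂ne hcl)
      · rintro (rfl | rfl)
        · exact hSmem s₁ t₁ ρ₁ w₁ hst₁ hw₁3 hw₁ne hw₁eq
        · exact hSmem s₂ t₂ ρ₂ w₂ hst₂ hw₂3 hw₂ne hw₂eq
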